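/- Let {g_k} be a sequence in the group N of n×n real upper triangular unipotent matrices satisfying the dichotomy condition and such that 𝒜(A,{g_k}) = {0}. For 0 < δ < 1 and g ∈ SL(n,ℝ), let Ω_{g,δ} = {t ∈ Lie(A) : ω_I(t) ≥ ln δ − ln‖g·e_I‖ for every nonempty I ⊆ [n]}, a bounded convex polytope in Lie(A). Then lim_{k→∞} Area(∂Ω_{g_k,δ}) / Vol(Ω_{g_k,δ}) = 0, where Vol is the Lebesgue measure on the hyperplane Lie(A) ≅ {t ∈ ℝⁿ : Σt_i = 0} and Area(∂·) is the outer Minkowski content of the boundary within this hyperplane. -/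

import Mathlib

open MeasureTheory Filter Topology Pointwise

attribute [local instance] Matrix.frobeniusNormedAddCommGroup

/-- `u` is an upper triangular unipotent matrix. -/
def IsUpperUnip {n : ℕ} (u : Matrix (Fin n) (Fin n) ℝ) : Prop :=
  (∀ i : Fin n, u i i = 1) ∧ ∀ i j : Fin n, j < i → u i j = 0

/-- The coordinate of `g·e_I` on the standard wedge basis vector `e_J` of `⋀^{|I|} ℝⁿ`:
the minor of `g` with rows `J` and columns `I` (and `0` if `J.card ≠ I.card`). -/
noncomputable def wedgeCoord {n : ℕ} (g : Matrix (Fin n) (Fin n) ℝ)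
    (J I : Finset (Fin n)) : ℝ :=
  if h : J.card = I.card then
    (g.submatrix (fun a : Fin I.card => (J.orderIsoOfFin h a : Fin n))
      (fun b : Fin I.card => (I.orderIsoOfFin rfl b : Fin n))).det
  else 0

/-- The norm `‖g·e_I‖` on `⋀^{|I|} ℝⁿ` induced by the Euclidean norm on `ℝⁿ`. -/
noncomputable def wedgeNorm {n : ℕ} (g : Matrix (Fin n) (Fin n) ℝ) (I : Finset (Fin n)) : ℝ :=
  Real.sqrt (∑ J ∈ Finset.univ.filter fun J : Finset (Fin n) => J.card = I.card,
    (wedgeCoord g J I) ^ 2)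

/-- The hyperplane `Lie(A) = {t ∈ ℝⁿ : Σ tᵢ = 0}`, as a subspace of Euclidean `ℝⁿ`;
it carries the induced Euclidean structure and the associated Lebesgue measure. -/
def LieA (n : ℕ) : Submodule ℝ (EuclideanSpace ℝ (Fin n)) where
  carrier := {t | ∑ i, t i = 0}
  add_mem' := by intro a b ha hb; simp_all [Finset.sum_add_distrib]
  zero_mem' := by simp
  smul_mem' := by intro c a ha; simp_all [← Finset.mul_sum]

noncomputable instance (n : ℕ) : MeasurableSpace (LieA n) := borel _
instance (n : ℕ) : BorelSpace (LieA n) := ⟨rfl⟩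

/-- The convex polytope `Ω_{g,δ} ⊆ Lie(A)` determined by
`ω_I(t) ≥ ln δ − ln ‖g·e_I‖` for all nonempty `I ⊆ {1,…,n}`. -/
noncomputable def OmegaSet {n : ℕ} (g : Matrix (Fin n) (Fin n) ℝ) (δ : ℝ) :
    Set (LieA n) :=
  {t | ∀ I : Finset (Fin n), I.Nonempty →
    Real.log δ - Real.log (wedgeNorm g I) ≤ ∑ i ∈ I, (t : EuclideanSpace ℝ (Fin n)) i}

lemma wedgeCoord_self {n : ℕ} {u : Matrix (Fin n) (Fin n) ℝ} (hu : IsUpperUnip u)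
    (I : Finset (Fin n)) : wedgeCoord u I I = 1 := by
  rw [wedgeCoord, dif_pos rfl]
  rw [Matrix.det_of_upperTriangular]
  · apply Finset.prod_eq_one
    intro a _
    exact hu.1 _
  · intro a b hba
    exact hu.2 _ _ (by exact_mod_cast Subtype.coe_lt_coe.mpr ((I.orderIsoOfFin rfl).strictMono hba))

lemma abs_wedgeCoord_le {n : ℕ} (u : Matrix (Fin n) (Fin n) ℝ) {J I : Finset (Fin n)}
    (h : J.card = I.card) : |wedgeCoord u J I| ≤ wedgeNorm u I := by
  rw [wedgeNorm, ← Real.sqrt_sq_eq_abs]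
  apply Real.sqrt_le_sqrt
  exact Finset.single_le_sum (f := fun J => (wedgeCoord u J I)^2)
    (fun J _ => sq_nonneg _) (Finset.mem_filter.mpr ⟨Finset.mem_univ _, h⟩)

lemma one_le_wedgeNorm {n : ℕ} {u : Matrix (Fin n) (Fin n) ℝ} (hu : IsUpperUnip u)
    (I : Finset (Fin n)) : 1 ≤ wedgeNorm u I := by
  have := abs_wedgeCoord_le u (J := I) (I := I) rfl
  rwa [wedgeCoord_self hu, abs_one] at this

lemma det_step {n : ℕ} {u : Matrix (Fin n) (Fin n) ℝ} (hu : IsUpperUnip u)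
    {I : Finset (Fin n)} {j i : Fin n} (hj : j ∉ I) (hi : i ∈ I) (hji : j < i)
    (hz : ∀ a b : Fin n, a < b → a ∉ I → b ∈ I → (b:ℕ) - (a:ℕ) < (i:ℕ) - (j:ℕ) → u a b = 0) :
    |wedgeCoord u (insert j (I.erase i)) I| = |u j i| := by
  classical
  set J : Finset (Fin n) := insert j (I.erase i) with hJ
  have hjE : j ∉ I.erase i := fun h => hj (Finset.mem_of_mem_erase h)
  have hJcard : J.card = I.card := by
    rw [hJ, Finset.card_insert_of_notMem hjE, Finset.card_erase_of_mem hi]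
    have : 1 ≤ I.card := Finset.card_pos.mpr ⟨i, hi⟩
    omega
  have hjJ : j ∈ J := Finset.mem_insert_self _ _
  rw [wedgeCoord, dif_pos hJcard]
  set m := I.card with hm
  set R := J.orderIsoOfFin hJcard with hR
  set C := I.orderIsoOfFin rfl with hC
  set jJ : {x // x ∈ J} := ⟨j, hjJ⟩ with hjJ'
  set bstar : Fin m := C.symm ⟨i, hi⟩ with hbstar
  have hCbstar : C bstar = ⟨i, hi⟩ := C.apply_symm_apply _
  have memJ : ∀ b : Fin m, b ≠ bstar → (↑(C b) : Fin n) ∈ J := by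
    intro b hb
    have h1 : (↑(C b) : Fin n) ∈ I := (C b).2
    have h2 : (↑(C b) : Fin n) ≠ i := by
      intro h
      exact hb (by
        have : C b = ⟨i, hi⟩ := Subtype.ext h
        have := congrArg C.symm this
        rwa [C.symm_apply_apply] at this)
    exact Finset.mem_insert_of_mem (Finset.mem_erase.mpr ⟨h2, h1⟩)
  set f : Fin m → Fin m := fun b => if h : b = bstar then R.symm jJ else R.symm ⟨↑(C b), memJ b h⟩
    with hf
  have hfinj : Function.Injective f := by
    intro b1 b2 he
    simp only [hf] at he
    by_cases h1 : b1 = bstar <;> by_cases h2 : b2 = bstar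
    · rw [h1, h2]
    · rw [dif_pos h1, dif_neg h2] at he
      have hmk : jJ = (⟨↑(C b2), memJ b2 h2⟩ : {x // x ∈ J}) := R.symm.injective he
      have hv' := congrArg (Subtype.val : {x // x ∈ J} → Fin n) hmk
      have hv : j = (↑(C b2) : Fin n) := hv'
      exact absurd ((C b2).2) (hv ▸ hj)
    · rw [dif_neg h1, dif_pos h2] at he
      have hmk : (⟨↑(C b1), memJ b1 h1⟩ : {x // x ∈ J}) = jJ := R.symm.injective he
      have hv' := congrArg (Subtype.val : {x // x ∈ J} → Fin n) hmk
      have hv : (↑(C b1) : Fin n) = j := hv'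
      exact absurd ((C b1).2) (hv.symm ▸ hj)
    · rw [dif_neg h1, dif_neg h2] at he
      have hmk : (⟨↑(C b1), memJ b1 h1⟩ : {x // x ∈ J}) = ⟨↑(C b2), memJ b2 h2⟩ :=
        R.symm.injective he
      have hv' := congrArg (Subtype.val : {x // x ∈ J} → Fin n) hmk
      have hv : (↑(C b1) : Fin n) = ↑(C b2) := hv'
      exact C.injective (Subtype.ext hv)
  set σ0 : Equiv.Perm (Fin m) := Equiv.ofBijective f (Finite.injective_iff_bijective.mp hfinj)
    with hσ0
  have hσ0app : ∀ b, σ0 b = f b := fun b => rfl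
  have hfb1 : f bstar = R.symm jJ := by simp only [hf, dif_pos]
  have hfb2 : ∀ (b : Fin m) (hb : b ≠ bstar), f b = R.symm ⟨↑(C b), memJ b hb⟩ := by
    intro b hb
    simp only [hf, dif_neg hb]
  -- the submatrix
  set M : Matrix (Fin m) (Fin m) ℝ := u.submatrix
    (fun a : Fin m => (↑(R a) : Fin n)) (fun b : Fin m => (↑(C b) : Fin n)) with hM
  -- key uniqueness claim
  have key : ∀ σ : Equiv.Perm (Fin m), (∏ b, M (σ b) b) ≠ 0 → σ = σ0 := by
    intro σ hprod
    have hfac : ∀ b : Fin m, M (σ b) b ≠ 0 := by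
      intro b
      exact Finset.prod_ne_zero_iff.mp hprod b (Finset.mem_univ b)
    have hA : ∀ b : Fin m, ((↑(R (σ b)) : Fin n) : ℕ) ≤ ((↑(C b) : Fin n) : ℕ) := by
      intro b
      by_contra hlt
      push_neg at hlt
      exact hfac b (hu.2 _ _ (by exact_mod_cast hlt))
    have hsumI : ∑ b : Fin m, (((↑(C b) : Fin n) : ℕ) : ℤ) = ∑ x ∈ I, ((x : ℕ) : ℤ) := by
      rw [← Finset.sum_coe_sort I (fun x => ((x : ℕ) : ℤ))]
      exact Equiv.sum_comp C.toEquiv (fun x => (((x : Fin n) : ℕ) : ℤ))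
    have hsumJgen : ∑ b : Fin m, (((↑(R (σ b)) : Fin n) : ℕ) : ℤ) = ∑ x ∈ J, ((x : ℕ) : ℤ) := by
      rw [← Finset.sum_coe_sort J (fun x => ((x : ℕ) : ℤ))]
      rw [Equiv.sum_comp σ (fun b => (((R b : Fin n) : ℕ) : ℤ))]
      exact Equiv.sum_comp R.toEquiv (fun x => (((x : Fin n) : ℕ) : ℤ))
    have hsumJ : ∑ x ∈ J, ((x : ℕ) : ℤ) = (j : ℤ) + (∑ x ∈ I, ((x : ℕ) : ℤ) - (i : ℤ)) := by
      rw [hJ, Finset.sum_insert hjE, ← Finset.sum_erase_add I _ hi]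
      ring
    have hsum : ∑ b : Fin m, ((((↑(C b) : Fin n) : ℕ) : ℤ) - (((↑(R (σ b)) : Fin n) : ℕ) : ℤ))
        = (i : ℤ) - (j : ℤ) := by
      rw [Finset.sum_sub_distrib, hsumI, hsumJgen, hsumJ]; ring
    have hnonneg : ∀ b : Fin m, 0 ≤ ((((↑(C b) : Fin n) : ℕ) : ℤ) - (((↑(R (σ b)) : Fin n) : ℕ) : ℤ)) := by
      intro b
      have := hA b
      omega
    -- the column receiving row j
    set bj : Fin m := σ.symm (R.symm jJ) with hbj
    have hRbj : R (σ bj) = jJ := by rw [hbj, σ.apply_symm_apply, R.apply_symm_apply]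
    have hfacbj := hfac bj
    have hMbj : M (σ bj) bj = u j (↑(C bj)) := by
      rw [hM, Matrix.submatrix_apply, hRbj]
    have hjle : (j : ℕ) ≤ ((↑(C bj) : Fin n) : ℕ) := by
      have := hA bj
      rwa [hRbj] at this
    have hjne : j ≠ (↑(C bj) : Fin n) := fun h => hj (h ▸ (C bj).2)
    have hjlt : j < (↑(C bj) : Fin n) := lt_of_le_of_ne (by exact_mod_cast hjle)
      (by exact hjne)
    have hgaplow : ¬ (((↑(C bj) : Fin n) : ℕ) - (j : ℕ) < (i : ℕ) - (j : ℕ)) := by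
      intro hgap
      exact hfacbj (by rw [hMbj]; exact hz j _ hjlt hj (C bj).2 hgap)
    have hgaphigh : ((((↑(C bj) : Fin n) : ℕ) : ℤ) - ((j : ℕ) : ℤ)) ≤ (i : ℤ) - (j : ℤ) := by
      have hsingle : ((((↑(C bj) : Fin n) : ℕ) : ℤ) - (((↑(R (σ bj)) : Fin n) : ℕ) : ℤ))
          ≤ ∑ b : Fin m, ((((↑(C b) : Fin n) : ℕ) : ℤ) - (((↑(R (σ b)) : Fin n) : ℕ) : ℤ)) :=
        Finset.single_le_sum (fun b _ => hnonneg b) (Finset.mem_univ bj)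
      rw [hsum, hRbj] at hsingle
      exact hsingle
    have hCbji : (↑(C bj) : Fin n) = i := by
      have h1 : (j : ℕ) < (i : ℕ) := hji
      have := hjle
      apply Fin.ext
      omega
    have hbjstar : bj = bstar := by
      have : C bj = ⟨i, hi⟩ := Subtype.ext hCbji
      have := congrArg C.symm this
      rwa [C.symm_apply_apply] at this
    have hσbstar : σ bstar = R.symm jJ := by
      rw [← hbjstar, hbj, σ.apply_symm_apply]
    -- all other displacements are zero
    have hrest : ∀ b : Fin m, b ≠ bstar →
        (↑(C b) : Fin n) = (↑(R (σ b)) : Fin n) := by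
      have hsplit : (∑ b ∈ Finset.univ.erase bstar, ((((↑(C b) : Fin n) : ℕ) : ℤ)
            - (((↑(R (σ b)) : Fin n) : ℕ) : ℤ)))
          + ((((↑(C bstar) : Fin n) : ℕ) : ℤ) - (((↑(R (σ bstar)) : Fin n) : ℕ) : ℤ))
          = (i : ℤ) - (j : ℤ) :=
        (Finset.sum_erase_add Finset.univ _ (Finset.mem_univ bstar)).trans hsum
      have hCv : ((↑(C bstar) : Fin n) : ℕ) = (i : ℕ) := by rw [hCbstar]
      have hRv : ((↑(R (σ bstar)) : Fin n) : ℕ) = (j : ℕ) := by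
        rw [hσbstar, R.apply_symm_apply]
      have hzero : ∑ b ∈ Finset.univ.erase bstar, ((((↑(C b) : Fin n) : ℕ) : ℤ)
          - (((↑(R (σ b)) : Fin n) : ℕ) : ℤ)) = 0 := by omega
      intro b hb
      have h0b : ((((↑(C b) : Fin n) : ℕ) : ℤ) - (((↑(R (σ b)) : Fin n) : ℕ) : ℤ)) = 0 :=
        (Finset.sum_eq_zero_iff_of_nonneg (fun b _ => hnonneg b)).mp hzero b
          (Finset.mem_erase.mpr ⟨hb, Finset.mem_univ b⟩)
      apply Fin.ext
      omega
    -- conclude σ = σ0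
    apply Equiv.ext
    intro b
    by_cases hb : b = bstar
    · rw [hb, hσbstar, hσ0app, hfb1]
    · rw [hσ0app, hfb2 b hb]
      have h2 : R (σ b) = ⟨↑(C b), memJ b hb⟩ := Subtype.ext (hrest b hb).symm
      have h3 := congrArg R.symm h2
      rwa [R.symm_apply_apply] at h3
  -- compute the determinant
  have hdet : (M : Matrix (Fin m) (Fin m) ℝ).det = Equiv.Perm.sign σ0 • (u j i) := by
    rw [Matrix.det_apply]
    rw [Finset.sum_eq_single_of_mem σ0 (Finset.mem_univ _)]
    · congr 1
      rw [Fintype.prod_eq_single bstar]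
      · rw [hσ0app, hfb1, hM, Matrix.submatrix_apply, R.apply_symm_apply, hCbstar]
      · intro b hb
        rw [hσ0app, hfb2 b hb, hM, Matrix.submatrix_apply, R.apply_symm_apply]
        exact hu.1 _
    · intro σ _ hne
      rcases eq_or_ne (∏ b, M (σ b) b) 0 with h0 | h0
      · rw [h0, smul_zero]
      · exact absurd (key σ h0) hne
  rw [hdet]
  rcases Int.units_eq_one_or (Equiv.Perm.sign σ0) with h | h <;> rw [h] <;> simp

section Graph
variable {n : ℕ} (g : ℕ → Matrix (Fin n) (Fin n) ℝ)

/-- Edge of the pattern graph. -/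
def EdgeP (i j : Fin n) : Prop := i < j ∧ ¬ ∀ k, g k i j = 0

/-- `I` is closed under taking tails of edges (down-set of the pattern DAG). -/
def DownClosed (I : Finset (Fin n)) : Prop := ∀ a b : Fin n, EdgeP g a b → b ∈ I → a ∈ I

lemma conn (hg : ∀ k, IsUpperUnip (g k))
    (htriv : ∀ t : Fin n → ℝ, (∑ i, t i) = 0 →
      Bornology.IsBounded (Set.range fun k => g k * Matrix.diagonal t * (g k)⁻¹) → t = 0) :
    ∀ i j : Fin n, Relation.ReflTransGen (fun a b => EdgeP g a b ∨ EdgeP g b a) i j := by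
  classical
  by_contra hcon
  push_neg at hcon
  obtain ⟨i0, j0, hreach⟩ := hcon
  set rel : Fin n → Fin n → Prop := fun a b => EdgeP g a b ∨ EdgeP g b a with hrel
  have hrelsymm : ∀ a b, rel a b → rel b a := fun a b h => h.elim Or.inr Or.inl
  set C : Finset (Fin n) := Finset.univ.filter (fun x => Relation.ReflTransGen rel i0 x) with hCdef
  have hmemC : ∀ x, x ∈ C ↔ Relation.ReflTransGen rel i0 x := by
    intro x; simp [hCdef]
  set t : Fin n → ℝ := fun x => (n : ℝ) * (if x ∈ C then 1 else 0) - C.card with ht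
  have hsum : ∑ i, t i = 0 := by
    simp only [ht]
    rw [Finset.sum_sub_distrib, ← Finset.mul_sum, Finset.sum_boole]
    have : Finset.univ.filter (fun x => x ∈ C) = C := by
      ext x; simp
    rw [this]
    simp [mul_comm]
  -- t is constant along edges
  have hconst : ∀ a b : Fin n, rel a b → t a = t b := by
    intro a b hab
    have : (a ∈ C ↔ b ∈ C) := by
      rw [hmemC, hmemC]
      constructor
      · intro h; exact h.tail hab
      · intro h; exact h.tail (hrelsymm a b hab)
    simp only [ht]
    by_cases h : a ∈ C
    · rw [if_pos h, if_pos (this.mp h)]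
    · rw [if_neg h, if_neg (fun hb => h (this.mpr hb))]
  have hcomm : ∀ k, g k * Matrix.diagonal t = Matrix.diagonal t * g k := by
    intro k
    ext i j
    rw [Matrix.mul_diagonal, Matrix.diagonal_mul]
    rcases eq_or_ne (g k i j) 0 with h0 | h0
    · rw [h0]; ring
    · rcases lt_trichotomy i j with hij | hij | hij
      · have : t i = t j := hconst i j (Or.inl ⟨hij, fun hall => h0 (hall k)⟩)
        rw [this]; ring
      · rw [hij]; ring
      · exact absurd ((hg k).2 i j hij) h0
  have hdet : ∀ k, IsUnit (g k).det := by
    intro k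
    have : (g k).det = 1 := by
      rw [Matrix.det_of_upperTriangular (fun a b hba => (hg k).2 a b hba)]
      simp [(hg k).1]
    rw [this]; exact isUnit_one
  have hconj : ∀ k, g k * Matrix.diagonal t * (g k)⁻¹ = Matrix.diagonal t := by
    intro k
    rw [hcomm k, Matrix.mul_assoc, Matrix.mul_nonsing_inv _ (hdet k), Matrix.mul_one]
  have hbd : Bornology.IsBounded (Set.range fun k => g k * Matrix.diagonal t * (g k)⁻¹) := by
    apply Bornology.IsBounded.subset (Bornology.isBounded_singleton (x := Matrix.diagonal t))
    rintro x ⟨k, rfl⟩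
    simp [hconj k]
  have ht0 := htriv t hsum hbd
  have hi0 : i0 ∈ C := (hmemC i0).mpr Relation.ReflTransGen.refl
  have hj0 : j0 ∉ C := fun h => hreach ((hmemC j0).mp h)
  have hclt : C.card < n := by
    have hCne : C ≠ Finset.univ := fun h => hj0 (by rw [h]; exact Finset.mem_univ j0)
    have := Finset.card_lt_card (Finset.ssubset_univ_iff.mpr hCne)
    simpa using this
  have hti0 : (n : ℝ) * 1 - C.card = 0 := by
    have h1 : t i0 = 0 := by rw [ht0]; rfl
    simp only [ht] at h1
    rwa [if_pos hi0] at h1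
  have hnle : (n : ℝ) ≤ (C.card : ℝ) := by linarith
  have : (n : ℕ) ≤ C.card := by exact_mod_cast hnle
  omega

lemma cross_edge (hconn : ∀ i j : Fin n,
      Relation.ReflTransGen (fun a b => EdgeP g a b ∨ EdgeP g b a) i j)
    {I : Finset (Fin n)} (hdc : DownClosed g I)
    (hne : I.Nonempty) (hproper : I ≠ Finset.univ) :
    ∃ a b : Fin n, EdgeP g a b ∧ a ∈ I ∧ b ∉ I := by
  classical
  obtain ⟨i0, hi0⟩ := hne
  have : ∃ j0, j0 ∉ I := by
    by_contra hall
    push_neg at hall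
    exact hproper (Finset.eq_univ_iff_forall.mpr hall)
  obtain ⟨j0, hj0⟩ := this
  have key : ∀ a b : Fin n, Relation.ReflTransGen (fun a b => EdgeP g a b ∨ EdgeP g b a) a b →
      b ∉ I → a ∈ I → ∃ x y : Fin n, EdgeP g x y ∧ x ∈ I ∧ y ∉ I := by
    intro a b hab hb
    induction hab using Relation.ReflTransGen.head_induction_on with
    | refl => intro h1; exact absurd h1 hb
    | @head a' c hstep htail ih =>
      intro ha
      by_cases hc : c ∈ I
      · exact ih hc
      · rcases hstep with he | he
        · exact ⟨a', c, he, ha, hc⟩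
        · exact absurd (hdc c a' he ha) hc
  exact key i0 j0 (hconn i0 j0) hj0 hi0
end Graph

section Tstar
variable {n : ℕ}

open Classical in
/-- out-degree minus in-degree of the pattern graph. -/
noncomputable def tstar (g : ℕ → Matrix (Fin n) (Fin n) ℝ) : Fin n → ℝ := fun i =>
  (((Finset.univ.filter (fun p : Fin n × Fin n => EdgeP g p.1 p.2)).filter
      (fun p => p.1 = i)).card : ℝ) -
  (((Finset.univ.filter (fun p : Fin n × Fin n => EdgeP g p.1 p.2)).filter
      (fun p => p.2 = i)).card : ℝ)

open Classical in
lemma sum_filter_fst (g : ℕ → Matrix (Fin n) (Fin n) ℝ) (I : Finset (Fin n)) :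
    ∑ i ∈ I, (((Finset.univ.filter (fun p : Fin n × Fin n => EdgeP g p.1 p.2)).filter
        (fun p => p.1 = i)).card : ℝ)
    = (((Finset.univ.filter (fun p : Fin n × Fin n => EdgeP g p.1 p.2)).filter
        (fun p => p.1 ∈ I)).card : ℝ) := by
  set E := Finset.univ.filter (fun p : Fin n × Fin n => EdgeP g p.1 p.2) with hE
  have h1 : (E.filter (fun p => p.1 ∈ I)).card
      = ∑ i ∈ I, ((E.filter (fun p => p.1 ∈ I)).filter (fun p => p.1 = i)).card := by
    apply Finset.card_eq_sum_card_fiberwise (f := Prod.fst)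
    intro p hp
    exact (Finset.mem_filter.mp hp).2
  have h2 : ∀ i ∈ I, ((E.filter (fun p => p.1 ∈ I)).filter (fun p => p.1 = i))
      = E.filter (fun p => p.1 = i) := by
    intro i hi
    rw [Finset.filter_filter]
    apply Finset.filter_congr
    intro p _
    constructor
    · rintro ⟨_, h⟩; exact h
    · rintro h; exact ⟨h ▸ hi, h⟩
  rw [h1]
  push_cast
  apply Finset.sum_congr rfl
  intro i hi
  rw [h2 i hi]

open Classical in
lemma sum_filter_snd (g : ℕ → Matrix (Fin n) (Fin n) ℝ) (I : Finset (Fin n)) :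
    ∑ i ∈ I, (((Finset.univ.filter (fun p : Fin n × Fin n => EdgeP g p.1 p.2)).filter
        (fun p => p.2 = i)).card : ℝ)
    = (((Finset.univ.filter (fun p : Fin n × Fin n => EdgeP g p.1 p.2)).filter
        (fun p => p.2 ∈ I)).card : ℝ) := by
  set E := Finset.univ.filter (fun p : Fin n × Fin n => EdgeP g p.1 p.2) with hE
  have h1 : (E.filter (fun p => p.2 ∈ I)).card
      = ∑ i ∈ I, ((E.filter (fun p => p.2 ∈ I)).filter (fun p => p.2 = i)).card := by
    apply Finset.card_eq_sum_card_fiberwise (f := Prod.snd)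
    intro p hp
    exact (Finset.mem_filter.mp hp).2
  have h2 : ∀ i ∈ I, ((E.filter (fun p => p.2 ∈ I)).filter (fun p => p.2 = i))
      = E.filter (fun p => p.2 = i) := by
    intro i hi
    rw [Finset.filter_filter]
    apply Finset.filter_congr
    intro p _
    constructor
    · rintro ⟨_, h⟩; exact h
    · rintro h; exact ⟨h ▸ hi, h⟩
  rw [h1]
  push_cast
  apply Finset.sum_congr rfl
  intro i hi
  rw [h2 i hi]

lemma tstar_sum_zero (g : ℕ → Matrix (Fin n) (Fin n) ℝ) : ∑ i, tstar g i = 0 := by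
  classical
  rw [show (∑ i, tstar g i) = ∑ i ∈ Finset.univ, tstar g i from rfl]
  unfold tstar
  rw [Finset.sum_sub_distrib]
  rw [sum_filter_fst g Finset.univ, sum_filter_snd g Finset.univ]
  simp

open Classical in
lemma tstar_downclosed_pos (g : ℕ → Matrix (Fin n) (Fin n) ℝ)
    (hconn : ∀ i j : Fin n,
      Relation.ReflTransGen (fun a b => EdgeP g a b ∨ EdgeP g b a) i j)
    {I : Finset (Fin n)} (hdc : DownClosed g I)
    (hne : I.Nonempty) (hproper : I ≠ Finset.univ) :
    1 ≤ ∑ i ∈ I, tstar g i := by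
  set E := Finset.univ.filter (fun p : Fin n × Fin n => EdgeP g p.1 p.2) with hE
  have hmemE : ∀ p : Fin n × Fin n, p ∈ E ↔ EdgeP g p.1 p.2 := by intro p; simp [hE]
  unfold tstar
  rw [Finset.sum_sub_distrib, sum_filter_fst g I, sum_filter_snd g I]
  -- split the two cardinalities
  have hsplit1 : (E.filter (fun p => p.1 ∈ I)).card
      = (E.filter (fun p => p.1 ∈ I ∧ p.2 ∈ I)).card
        + (E.filter (fun p => p.1 ∈ I ∧ p.2 ∉ I)).card := by
    rw [← Finset.filter_filter, ← Finset.filter_filter]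
    exact (Finset.card_filter_add_card_filter_not
      (s := E.filter (fun p : Fin n × Fin n => p.1 ∈ I)) (fun p : Fin n × Fin n => p.2 ∈ I)).symm
  have hsplit2 : (E.filter (fun p => p.2 ∈ I)).card
      = (E.filter (fun p => p.1 ∈ I ∧ p.2 ∈ I)).card := by
    congr 1
    apply Finset.filter_congr
    intro p hp
    constructor
    · intro h2; exact ⟨hdc p.1 p.2 ((hmemE p).mp hp) h2, h2⟩
    · rintro ⟨_, h2⟩; exact h2
  have hcross : 1 ≤ (E.filter (fun p => p.1 ∈ I ∧ p.2 ∉ I)).card := by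
    obtain ⟨a, b, he, ha, hb⟩ := cross_edge g hconn hdc hne hproper
    apply Finset.card_pos.mpr
    exact ⟨(a, b), Finset.mem_filter.mpr ⟨(hmemE (a,b)).mpr he, ha, hb⟩⟩
  rw [hsplit1, hsplit2]
  push_cast
  have : (1 : ℝ) ≤ ((E.filter (fun p => p.1 ∈ I ∧ p.2 ∉ I)).card : ℝ) := by exact_mod_cast hcross
  linarith

/-- If `I` is not down-closed then its wedge norm blows up. -/
lemma nondown_tendsto {g : ℕ → Matrix (Fin n) (Fin n) ℝ}
    (hg : ∀ k, IsUpperUnip (g k))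
    (hdich : ∀ i j : Fin n, i < j →
      (∀ k, g k i j = 0) ∨ Filter.Tendsto (fun k => |g k i j|) Filter.atTop Filter.atTop)
    {I : Finset (Fin n)} (hnd : ¬ DownClosed g I) :
    Filter.Tendsto (fun k => wedgeNorm (g k) I) Filter.atTop Filter.atTop := by
  classical
  unfold DownClosed at hnd
  push_neg at hnd
  obtain ⟨a0, b0, he0, hb0, ha0⟩ := hnd
  set Bad : Finset (Fin n × Fin n) := Finset.univ.filter
    (fun p : Fin n × Fin n => EdgeP g p.1 p.2 ∧ p.1 ∉ I ∧ p.2 ∈ I) with hBad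
  have hBadne : Bad.Nonempty := ⟨(a0, b0), by simp [hBad]; exact ⟨he0, ha0, hb0⟩⟩
  obtain ⟨p0, hp0mem, hp0min⟩ := Finset.exists_min_image Bad (fun p => (p.2 : ℕ) - (p.1 : ℕ)) hBadne
  have hp0 : EdgeP g p0.1 p0.2 ∧ p0.1 ∉ I ∧ p0.2 ∈ I := by
    have := Finset.mem_filter.mp hp0mem
    exact this.2
  set j := p0.1 with hj'
  set i := p0.2 with hi'
  have hji : j < i := hp0.1.1
  have hz : ∀ k, ∀ a b : Fin n, a < b → a ∉ I → b ∈ I →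
      (b : ℕ) - (a : ℕ) < (i : ℕ) - (j : ℕ) → g k a b = 0 := by
    intro k a b hab haI hbI hgap
    by_cases he : EdgeP g a b
    · exfalso
      have hmem : (a, b) ∈ Bad := by simp [hBad]; exact ⟨he, haI, hbI⟩
      have h5 := hp0min (a, b) hmem
      simp only [Prod.fst, Prod.snd] at h5
      omega
    · unfold EdgeP at he
      push_neg at he
      exact he hab k
  have hcard : (insert j (I.erase i)).card = I.card := by
    have hjE : j ∉ I.erase i := fun h => hp0.2.1 (Finset.mem_of_mem_erase h)
    rw [Finset.card_insert_of_notMem hjE, Finset.card_erase_of_mem hp0.2.2]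
    have : 1 ≤ I.card := Finset.card_pos.mpr ⟨i, hp0.2.2⟩
    omega
  have habs : ∀ k, |g k j i| ≤ wedgeNorm (g k) I := by
    intro k
    have h1 := det_step (hg k) hp0.2.1 hp0.2.2 hji (hz k)
    rw [← h1]
    exact abs_wedgeCoord_le (g k) hcard
  have htend : Filter.Tendsto (fun k => |g k j i|) Filter.atTop Filter.atTop := by
    rcases hdich j i hji with h | h
    · exact absurd h hp0.1.2
    · exact h
  exact Filter.tendsto_atTop_mono habs htend
end Tstar

section Geometry
variable {n : ℕ}

lemma coord_abs_le_norm (x : EuclideanSpace ℝ (Fin n)) (i : Fin n) : |x i| ≤ ‖x‖ := by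
  rw [EuclideanSpace.norm_eq, ← Real.sqrt_sq_eq_abs]
  apply Real.sqrt_le_sqrt
  have : |x i| ^ 2 ≤ ∑ j, ‖x j‖ ^ 2 := by
    have := Finset.single_le_sum (f := fun j => ‖x j‖ ^ 2) (fun j _ => sq_nonneg _)
      (Finset.mem_univ i)
    simpa [Real.norm_eq_abs, sq_abs] using this
  simpa [sq_abs] using this

lemma sum_coord_lower (I : Finset (Fin n)) (x : EuclideanSpace ℝ (Fin n)) :
    -((n : ℝ) * ‖x‖) ≤ ∑ i ∈ I, x i := by
  have h1 : ∀ i ∈ I, -‖x‖ ≤ x i := by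
    intro i _
    have := coord_abs_le_norm x i
    have := abs_le.mp (le_refl |x i|)
    cases' abs_le.mp (le_of_eq (rfl : |x i| = |x i|)) with hl hr
    linarith [neg_abs_le (x i), coord_abs_le_norm x i]
  calc -((n : ℝ) * ‖x‖) ≤ ∑ i ∈ I, (-‖x‖) := by
        rw [Finset.sum_const, nsmul_eq_mul]
        have hcard : (I.card : ℝ) ≤ n := by
          exact_mod_cast (by simpa using Finset.card_le_card (Finset.subset_univ I) : I.card ≤ n)
        have hn : 0 ≤ ‖x‖ := norm_nonneg _
        nlinarith
    _ ≤ ∑ i ∈ I, x i := Finset.sum_le_sum h1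

lemma lieA_sum_zero (t : LieA n) : ∑ i, (t : EuclideanSpace ℝ (Fin n)) i = 0 := t.2

lemma omegaSet_closed (gm : Matrix (Fin n) (Fin n) ℝ) (δ : ℝ) :
    IsClosed (OmegaSet gm δ) := by
  have : OmegaSet gm δ = ⋂ (I : Finset (Fin n)), ⋂ (_ : I.Nonempty),
      {t : LieA n | Real.log δ - Real.log (wedgeNorm gm I)
        ≤ ∑ i ∈ I, (t : EuclideanSpace ℝ (Fin n)) i} := by
    ext t
    simp [OmegaSet, Set.mem_iInter]
  rw [this]
  refine isClosed_iInter fun I => isClosed_iInter fun _ => ?_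
  have hcont : Continuous (fun t : LieA n => ∑ i ∈ I, (t : EuclideanSpace ℝ (Fin n)) i) := by
    apply continuous_finset_sum
    intro i _
    exact (EuclideanSpace.proj i).continuous.comp continuous_subtype_val
  exact isClosed_le continuous_const hcont

lemma omegaSet_convex (gm : Matrix (Fin n) (Fin n) ℝ) (δ : ℝ) :
    Convex ℝ (OmegaSet gm δ) := by
  intro x hx y hy a b ha hb hab
  intro I hI
  have hx' := hx I hI
  have hy' := hy I hI
  have hco : ∀ i : Fin n, ((a • x + b • y : LieA n) : EuclideanSpace ℝ (Fin n)) i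
      = a * (x : EuclideanSpace ℝ (Fin n)) i + b * (y : EuclideanSpace ℝ (Fin n)) i := by
    intro i
    rfl
  have hsum : ∑ i ∈ I, ((a • x + b • y : LieA n) : EuclideanSpace ℝ (Fin n)) i
      = a * ∑ i ∈ I, (x : EuclideanSpace ℝ (Fin n)) i
        + b * ∑ i ∈ I, (y : EuclideanSpace ℝ (Fin n)) i := by
    simp only [hco]
    rw [Finset.sum_add_distrib, Finset.mul_sum, Finset.mul_sum]
  rw [hsum]
  have h1 := mul_le_mul_of_nonneg_left hx' ha
  have h2 := mul_le_mul_of_nonneg_left hy' hb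
  have h3 : a * (Real.log δ - Real.log (wedgeNorm gm I))
      + b * (Real.log δ - Real.log (wedgeNorm gm I))
      = Real.log δ - Real.log (wedgeNorm gm I) := by
    rw [← add_mul, hab, one_mul]
  linarith

lemma omegaSet_bounded (gm : Matrix (Fin n) (Fin n) ℝ) (δ : ℝ) :
    Bornology.IsBounded (OmegaSet gm δ) := by
  classical
  set L : Fin n → ℝ := fun i => Real.log δ - Real.log (wedgeNorm gm {i}) with hL
  set Mb : ℝ := ∑ j, |L j| with hMb
  have habs : ∀ t ∈ OmegaSet gm δ, ∀ i : Fin n, |(t : EuclideanSpace ℝ (Fin n)) i| ≤ Mb := by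
    intro t ht i
    have hlow : ∀ j : Fin n, L j ≤ (t : EuclideanSpace ℝ (Fin n)) j := by
      intro j
      have := ht {j} (Finset.singleton_nonempty j)
      simpa [hL] using this
    have hsum0 := lieA_sum_zero t
    have herase : (t : EuclideanSpace ℝ (Fin n)) i
        = -∑ j ∈ Finset.univ.erase i, (t : EuclideanSpace ℝ (Fin n)) j := by
      have := Finset.sum_erase_add Finset.univ (fun j => (t : EuclideanSpace ℝ (Fin n)) j)
        (Finset.mem_univ i)
      rw [hsum0] at this
      linarith
    have h2 : (t : EuclideanSpace ℝ (Fin n)) i ≤ ∑ j ∈ Finset.univ.erase i, |L j| := by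
      rw [herase]
      have : ∑ j ∈ Finset.univ.erase i, (-|L j|) ≤ ∑ j ∈ Finset.univ.erase i,
          (t : EuclideanSpace ℝ (Fin n)) j :=
        Finset.sum_le_sum (fun j _ => le_trans (neg_abs_le (L j)) (hlow j))
      have h4 : ∑ j ∈ Finset.univ.erase i, (-|L j|)
          = -∑ j ∈ Finset.univ.erase i, |L j| := by
        rw [Finset.sum_neg_distrib]
      linarith [this, h4]
    have h4 : ∑ j ∈ Finset.univ.erase i, |L j| ≤ Mb :=
      Finset.sum_le_sum_of_subset_of_nonneg (Finset.subset_univ _) (fun j _ _ => abs_nonneg _)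
    have h5 : -Mb ≤ (t : EuclideanSpace ℝ (Fin n)) i := by
      have := hlow i
      have h6 : |L i| ≤ Mb := Finset.single_le_sum (f := fun j => |L j|)
        (fun j _ => abs_nonneg _) (Finset.mem_univ i)
      have := neg_abs_le (L i)
      linarith
    rw [abs_le]
    constructor
    · exact h5
    · linarith
  have hnorm : ∀ t ∈ OmegaSet gm δ, ‖t‖ ≤ Real.sqrt ((n : ℝ) * Mb ^ 2) := by
    intro t ht
    have : ‖t‖ = ‖(t : EuclideanSpace ℝ (Fin n))‖ := rfl
    rw [this, EuclideanSpace.norm_eq]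
    apply Real.sqrt_le_sqrt
    calc ∑ i, ‖(t : EuclideanSpace ℝ (Fin n)) i‖ ^ 2
        ≤ ∑ _i : Fin n, Mb ^ 2 := by
          apply Finset.sum_le_sum
          intro i _
          rw [Real.norm_eq_abs]
          have h1 := habs t ht i
          have h2 : (0:ℝ) ≤ |(t : EuclideanSpace ℝ (Fin n)) i| := abs_nonneg _
          nlinarith
      _ = (n : ℝ) * Mb ^ 2 := by
          rw [Finset.sum_const, nsmul_eq_mul]
          simp
  apply Bornology.IsBounded.subset (Metric.isBounded_closedBall
    (x := (0 : LieA n)) (r := Real.sqrt ((n : ℝ) * Mb ^ 2)))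
  intro t ht
  rw [Metric.mem_closedBall, dist_zero_right]
  exact hnorm t ht

lemma ball_subset_omega {gm : Matrix (Fin n) (Fin n) ℝ} {δ : ℝ} (hu : IsUpperUnip gm)
    (hδ0 : 0 < δ) (hδ1 : δ < 1) (c : LieA n) (r : ℝ) (hr : 0 ≤ r)
    (hsl : ∀ I : Finset (Fin n), I.Nonempty → I ≠ Finset.univ →
      Real.log δ - Real.log (wedgeNorm gm I) + (n : ℝ) * r
        ≤ ∑ i ∈ I, (c : EuclideanSpace ℝ (Fin n)) i) :
    Metric.closedBall c r ⊆ OmegaSet gm δ := by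
  intro t ht I hI
  by_cases hIu : I = Finset.univ
  · subst hIu
    rw [lieA_sum_zero t]
    have h1 : Real.log δ < 0 := Real.log_neg hδ0 hδ1
    have h2 : 0 ≤ Real.log (wedgeNorm gm Finset.univ) :=
      Real.log_nonneg (one_le_wedgeNorm hu _)
    linarith
  · have hc := hsl I hI hIu
    have hdist : ‖(t - c : LieA n)‖ ≤ r := by
      rw [Metric.mem_closedBall] at ht
      rwa [dist_eq_norm] at ht
    have hlow : -((n:ℝ) * r) ≤ ∑ i ∈ I, ((t - c : LieA n) : EuclideanSpace ℝ (Fin n)) i := by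
      have h1 := sum_coord_lower I ((t - c : LieA n) : EuclideanSpace ℝ (Fin n))
      have h2 : ‖((t - c : LieA n) : EuclideanSpace ℝ (Fin n))‖ ≤ r := hdist
      have h3 : (n:ℝ) * ‖((t - c : LieA n) : EuclideanSpace ℝ (Fin n))‖ ≤ (n:ℝ) * r :=
        mul_le_mul_of_nonneg_left h2 (by positivity)
      linarith
    have hco : ∀ i, ((t - c : LieA n) : EuclideanSpace ℝ (Fin n)) i
        = (t : EuclideanSpace ℝ (Fin n)) i - (c : EuclideanSpace ℝ (Fin n)) i := fun i => rfl
    have hsplit : ∑ i ∈ I, (t : EuclideanSpace ℝ (Fin n)) i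
        = ∑ i ∈ I, (c : EuclideanSpace ℝ (Fin n)) i
          + ∑ i ∈ I, ((t - c : LieA n) : EuclideanSpace ℝ (Fin n)) i := by
      simp only [hco]
      rw [Finset.sum_sub_distrib]
      ring
    rw [hsplit]
    linarith
end Geometry

section AreaVol
open MeasureTheory Filter Topology Pointwise
variable {n : ℕ}

lemma area_vol_bound (K : Set (LieA n)) (hconv : Convex ℝ K) (hcl : IsClosed K)
    (hbd : Bornology.IsBounded K) {c : LieA n} {r : ℝ} (hr : 0 < r)
    (hball : Metric.closedBall c r ⊆ K) {S : ℝ}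
    (hS : Tendsto (fun ε : ℝ =>
        ((volume (K + Metric.closedBall (0 : LieA n) ε)).toReal - (volume K).toReal) / ε)
      (𝓝[>] 0) (𝓝 S)) :
    0 ≤ S ∧ S / (volume K).toReal ≤ (Module.finrank ℝ (LieA n) : ℝ) / r := by
  classical
  have hKcomp : IsCompact K := Metric.isCompact_of_isClosed_isBounded hcl hbd
  have hVfin : volume K < ⊤ := hKcomp.measure_lt_top
  have hVpos : 0 < volume K := by
    have h1 : 0 < volume (Metric.ball c r) := Metric.measure_ball_pos volume c hr
    exact lt_of_lt_of_le h1 (measure_mono (Metric.ball_subset_closedBall.trans hball))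
  set V : ℝ := (volume K).toReal with hV
  have hV0 : 0 < V := ENNReal.toReal_pos hVpos.ne' hVfin.ne
  set d : ℕ := Module.finrank ℝ (LieA n) with hd
  -- inclusion
  have hsub : ∀ ε : ℝ, 0 < ε → K + Metric.closedBall (0 : LieA n) ε
      ⊆ ((1 + ε / r) • K) + {(-(ε / r)) • c} := by
    intro ε hε
    have hεr : 0 < ε / r := div_pos hε hr
    have h1 : (1 + ε / r) • K = K + (ε / r) • K := by
      rw [hconv.add_smul zero_le_one hεr.le, one_smul]
    rw [h1]
    rintro x hx
    rw [Set.mem_add] at hx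
    obtain ⟨a, ha, b, hb, rfl⟩ := hx
    have hbn : ‖b‖ ≤ ε := by rwa [Metric.mem_closedBall, dist_zero_right] at hb
    have hmemball : (r / ε) • b + c ∈ Metric.closedBall c r := by
      rw [Metric.mem_closedBall, dist_eq_norm]
      have : (r / ε) • b + c - c = (r / ε) • b := by abel
      rw [this, norm_smul, Real.norm_eq_abs, abs_of_pos (div_pos hr hε)]
      calc r / ε * ‖b‖ ≤ r / ε * ε := mul_le_mul_of_nonneg_left hbn (div_pos hr hε).le
        _ = r := div_mul_cancel₀ r hε.ne'
    have hK2 : (ε / r) • ((r / ε) • b + c) ∈ (ε / r) • K :=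
      Set.smul_mem_smul_set (hball hmemball)
    have hxeq : a + b = (a + (ε / r) • ((r / ε) • b + c)) + (-(ε / r)) • c := by
      have e1 : (ε / r) • ((r / ε) • b + c) = b + (ε / r) • c := by
        rw [smul_add, smul_smul]
        congr 1
        have : ε / r * (r / ε) = 1 := by field_simp
        rw [this, one_smul]
      rw [e1, neg_smul]
      abel
    rw [hxeq]
    exact Set.add_mem_add (Set.add_mem_add ha hK2) (Set.mem_singleton _)
  -- measure bound
  have hmeas : ∀ ε : ℝ, 0 < ε → volume (K + Metric.closedBall (0 : LieA n) ε)
      ≤ ENNReal.ofReal ((1 + ε / r) ^ d) * volume K := by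
    intro ε hε
    have h2 : volume (((1 + ε / r) • K) + {(-(ε / r)) • c}) = volume ((1 + ε / r) • K) := by
      rw [Set.add_singleton, Set.image_add_right, measure_preimage_add_right]
    have h3 : volume ((1 + ε / r) • K) = ENNReal.ofReal ((1 + ε / r) ^ d) * volume K := by
      rw [Measure.addHaar_smul volume, ← hd]
      congr 2
      rw [abs_of_pos]
      positivity
    calc volume (K + Metric.closedBall (0 : LieA n) ε)
        ≤ volume (((1 + ε / r) • K) + {(-(ε / r)) • c}) := measure_mono (hsub ε hε)
      _ = ENNReal.ofReal ((1 + ε / r) ^ d) * volume K := by rw [h2, h3]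
  -- real version of the bound
  have hquot : ∀ᶠ ε in 𝓝[>] (0:ℝ),
      ((volume (K + Metric.closedBall (0 : LieA n) ε)).toReal - V) / ε
        ≤ (((1 + ε / r) ^ d - 1) / ε) * V := by
    filter_upwards [self_mem_nhdsWithin] with ε hε
    have hε : (0:ℝ) < ε := hε
    have hfin : ENNReal.ofReal ((1 + ε / r) ^ d) * volume K ≠ ⊤ :=
      ENNReal.mul_ne_top ENNReal.ofReal_ne_top hVfin.ne
    have h1 : (volume (K + Metric.closedBall (0 : LieA n) ε)).toReal ≤ (1 + ε / r) ^ d * V := by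
      have h2 := ENNReal.toReal_mono hfin (hmeas ε hε)
      rwa [ENNReal.toReal_mul, ENNReal.toReal_ofReal (by positivity)] at h2
    rw [div_mul_eq_mul_div, sub_mul, one_mul]
    apply div_le_div_of_nonneg_right ?_ hε.le
    linarith
  -- the limit of the comparison function
  have hφ : Tendsto (fun ε : ℝ => (((1 + ε / r) ^ d - 1) / ε) * V) (𝓝[>] 0)
      (𝓝 (((d : ℝ) / r) * V)) := by
    have h0 : HasDerivAt (fun x : ℝ => 1 + x / r) (1 / r) 0 :=
      ((hasDerivAt_id (0:ℝ)).div_const r).const_add 1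
    have h1 : HasDerivAt (fun x : ℝ => (1 + x / r) ^ d) ((d:ℝ) * (1 + (0:ℝ) / r) ^ (d - 1) * (1 / r)) 0 :=
      h0.pow d
    have h2 : (d : ℝ) * (1 + (0:ℝ) / r) ^ (d - 1) * (1 / r) = (d : ℝ) / r := by
      rw [zero_div, add_zero, one_pow, mul_one, mul_one_div]
    rw [h2] at h1
    have h3 := hasDerivAt_iff_tendsto_slope.mp h1
    have h4 : Tendsto (fun ε : ℝ => ((1 + ε / r) ^ d - 1) / ε) (𝓝[≠] 0) (𝓝 ((d : ℝ) / r)) := by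
      apply h3.congr
      intro ε
      rw [slope_def_field]
      simp
    have h5 : Tendsto (fun ε : ℝ => ((1 + ε / r) ^ d - 1) / ε) (𝓝[>] 0) (𝓝 ((d : ℝ) / r)) :=
      h4.mono_left (nhdsWithin_mono 0 (fun x hx => ne_of_gt hx))
    exact h5.mul_const V
  have hSle : S ≤ ((d : ℝ) / r) * V := le_of_tendsto_of_tendsto hS hφ hquot
  have hS0 : 0 ≤ S := by
    apply ge_of_tendsto hS
    filter_upwards [self_mem_nhdsWithin] with ε hε
    have hε : (0:ℝ) < ε := hε
    apply div_nonneg _ hε.le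
    rw [sub_nonneg, hV]
    apply ENNReal.toReal_mono
    · exact (lt_of_le_of_lt (hmeas ε hε) (ENNReal.mul_lt_top ENNReal.ofReal_lt_top hVfin)).ne
    · apply measure_mono
      apply Set.subset_add_left
      exact Metric.mem_closedBall_self hε.le
  refine ⟨hS0, ?_⟩
  rw [div_le_iff₀ hV0]
  calc S ≤ ((d : ℝ) / r) * V := hSle
    _ = (d : ℝ) / r * V := rfl
end AreaVol

/-- **Proposition (p53).** Let `{g_k}` be a sequence of upper triangular unipotent matrices
satisfying the dichotomy condition and with `𝒜(A,{g_k}) = {0}`.  Then for `0 < δ < 1`,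
`Area(∂Ω_{g_k,δ}) / Vol(Ω_{g_k,δ}) → 0` as `k → ∞`, where `Vol` is Lebesgue measure on the
hyperplane `Lie(A)` and `Area(∂·)` is outer Minkowski content within this hyperplane. -/
theorem stmt_14 {n : ℕ} (g : ℕ → Matrix (Fin n) (Fin n) ℝ)
    (hg : ∀ k, IsUpperUnip (g k))
    (hdich : ∀ i j : Fin n, i < j →
      (∀ k, g k i j = 0) ∨ Tendsto (fun k => |g k i j|) atTop atTop)
    (htriv : ∀ t : Fin n → ℝ, (∑ i, t i) = 0 →
      Bornology.IsBounded (Set.range fun k => g k * Matrix.diagonal t * (g k)⁻¹) → t = 0)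
    {δ : ℝ} (hδ0 : 0 < δ) (hδ1 : δ < 1)
    -- `S k` is the outer Minkowski content of `∂Ω_{g_k,δ}` within the hyperplane `Lie(A)`
    (S : ℕ → ℝ)
    (hS : ∀ k, Tendsto
      (fun ε : ℝ =>
        ((volume (OmegaSet (g k) δ + Metric.closedBall (0 : LieA n) ε)).toReal -
          (volume (OmegaSet (g k) δ)).toReal) / ε)
      (𝓝[>] 0) (𝓝 (S k))) :
    Tendsto (fun k => S k / (volume (OmegaSet (g k) δ)).toReal) atTop (𝓝 0) := by
  classical
  have hconn := conn g hg htriv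
  have htsum : ∑ i, tstar g i = 0 := tstar_sum_zero g
  set tE : EuclideanSpace ℝ (Fin n) := (WithLp.toLp 2 (tstar g)) with htE
  have htmem : tE ∈ LieA n := htsum
  set tst : LieA n := ⟨tE, htmem⟩ with htst
  set Cb : ℝ := (∑ i, |tstar g i|) + 1 with hCb
  have hCb0 : 0 < Cb := by
    have : 0 ≤ ∑ i, |tstar g i| := Finset.sum_nonneg (fun i _ => abs_nonneg _)
    linarith
  have homega_bound : ∀ I : Finset (Fin n), |∑ i ∈ I, tstar g i| ≤ Cb := by
    intro I
    calc |∑ i ∈ I, tstar g i| ≤ ∑ i ∈ I, |tstar g i| := Finset.abs_sum_le_sum_abs _ _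
      _ ≤ ∑ i, |tstar g i| := Finset.sum_le_sum_of_subset_of_nonneg
          (Finset.subset_univ I) (fun i _ _ => abs_nonneg _)
      _ ≤ Cb := by rw [hCb]; linarith
  set Bset : Finset (Finset (Fin n)) :=
    Finset.univ.filter (fun I => I.Nonempty ∧ ¬ DownClosed g I) with hBset
  have hBtend : ∀ I ∈ Bset, Tendsto (fun k => Real.log (wedgeNorm (g k) I)) atTop atTop := by
    intro I hI
    have hnd : ¬ DownClosed g I := by
      have := Finset.mem_filter.mp hI
      exact this.2.2
    exact Real.tendsto_log_atTop.comp (nondown_tendsto hg hdich hnd)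
  set mB : ℕ → ℝ := fun k => if h : Bset.Nonempty then
      Bset.inf' h (fun I => Real.log (wedgeNorm (g k) I)) else (k : ℝ) with hmB
  have hmBtend : Tendsto mB atTop atTop := by
    by_cases h : Bset.Nonempty
    · rw [tendsto_atTop]
      intro N
      have hev := (eventually_all_finset Bset).mpr
        (fun I hI => (hBtend I hI).eventually_ge_atTop N)
      filter_upwards [hev] with k hk
      simp only [hmB, dif_pos h]
      exact Finset.le_inf' h _ (fun I hI => hk I hI)
    · have heq : mB = fun k : ℕ => (k : ℝ) := by
        funext k
        simp only [hmB, dif_neg h]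
      rw [heq]
      exact tendsto_natCast_atTop_atTop
  have hmB_le : ∀ (k : ℕ) (I : Finset (Fin n)), I.Nonempty → ¬ DownClosed g I →
      mB k ≤ Real.log (wedgeNorm (g k) I) := by
    intro k I h1 h2
    have hI : I ∈ Bset := by
      rw [hBset, Finset.mem_filter]
      exact ⟨Finset.mem_univ _, h1, h2⟩
    have hne : Bset.Nonempty := ⟨I, hI⟩
    simp only [hmB, dif_pos hne]
    exact Finset.inf'_le _ hI
  set s : ℕ → ℝ := fun k => max 0 (min (k : ℝ) (mB k / (2 * Cb))) with hs
  have hs0 : ∀ k, 0 ≤ s k := fun k => le_max_left _ _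
  have hstend : Tendsto s atTop atTop := by
    rw [tendsto_atTop]
    intro N
    filter_upwards [(tendsto_natCast_atTop_atTop (R := ℝ)).eventually_ge_atTop N,
      hmBtend.eventually_ge_atTop (N * (2 * Cb))] with k h1 h2
    have h3 : N ≤ mB k / (2 * Cb) := (le_div_iff₀ (by linarith)).mpr h2
    have h4 : N ≤ min (k : ℝ) (mB k / (2 * Cb)) := le_min h1 h3
    exact le_trans h4 (le_max_right _ _)
  set q : ℕ → ℝ := fun k => min (s k) (mB k / 2) with hq
  have hqtend : Tendsto q atTop atTop := by
    rw [tendsto_atTop]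
    intro N
    filter_upwards [hstend.eventually_ge_atTop N, hmBtend.eventually_ge_atTop (N * 2)]
      with k h1 h2
    have h3 : N ≤ mB k / 2 := by linarith
    exact le_min h1 h3
  set rr : ℕ → ℝ := fun k => (q k - Real.log δ) / ((n : ℝ) + 1) with hrr
  have hrrtend : Tendsto rr atTop atTop := by
    apply Tendsto.atTop_div_const (by positivity)
    exact tendsto_atTop_add_const_right _ _ hqtend
  have hball : ∀ k, 0 ≤ rr k → 0 ≤ mB k →
      Metric.closedBall ((s k) • tst) (rr k) ⊆ OmegaSet (g k) δ := by
    intro k hrk hmk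
    apply ball_subset_omega (hg k) hδ0 hδ1 _ _ hrk
    intro I hIne hIu
    have hco : ∑ i ∈ I, (((s k • tst : LieA n)) : EuclideanSpace ℝ (Fin n)) i
        = s k * ∑ i ∈ I, tstar g i := by
      rw [Finset.mul_sum]
      apply Finset.sum_congr rfl
      intro i _
      rfl
    rw [hco]
    have hnr : (n : ℝ) * rr k ≤ ((n : ℝ) + 1) * rr k := by nlinarith
    have hq1 : ((n : ℝ) + 1) * rr k = q k - Real.log δ := by
      rw [hrr]
      field_simp
    by_cases hdc : DownClosed g I
    · have h1 : 1 ≤ ∑ i ∈ I, tstar g i := tstar_downclosed_pos g hconn hdc hIne hIu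
      have h2 : s k ≤ s k * ∑ i ∈ I, tstar g i := by nlinarith [hs0 k]
      have h3 : q k ≤ s k := min_le_left _ _
      have h4 : 0 ≤ Real.log (wedgeNorm (g k) I) :=
        Real.log_nonneg (one_le_wedgeNorm (hg k) I)
      linarith
    · have hb := hmB_le k I hIne hdc
      have h5 := homega_bound I
      have h6 : -(s k * Cb) ≤ s k * ∑ i ∈ I, tstar g i := by
        have h5' := abs_le.mp h5
        nlinarith [hs0 k]
      have h7 : s k ≤ mB k / (2 * Cb) := by
        have ha : min (k : ℝ) (mB k / (2 * Cb)) ≤ mB k / (2 * Cb) := min_le_right _ _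
        have hb' : (0:ℝ) ≤ mB k / (2 * Cb) := div_nonneg hmk (by linarith)
        rw [hs]
        exact max_le hb' ha
      have h8 : s k * Cb ≤ mB k / 2 := by
        have := mul_le_mul_of_nonneg_right h7 hCb0.le
        calc s k * Cb ≤ mB k / (2 * Cb) * Cb := this
          _ = mB k / 2 := by field_simp
      have h9 : q k ≤ mB k / 2 := min_le_right _ _
      have key1 : (n:ℝ) * rr k ≤ q k - Real.log δ := by linarith [hnr, hq1]
      have key2 : Real.log δ - Real.log (wedgeNorm (g k) I) + (n:ℝ) * rr k ≤ q k - mB k := by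
        linarith [key1, hb]
      have key3 : q k - mB k ≤ -(mB k / 2) := by linarith [h9]
      have key4 : -(mB k / 2) ≤ -(s k * Cb) := by linarith [h8]
      exact le_trans (le_trans (le_trans key2 key3) key4) h6
  have hdrtend : Tendsto (fun k => (Module.finrank ℝ (LieA n) : ℝ) / rr k) atTop (𝓝 0) :=
    Tendsto.div_atTop tendsto_const_nhds hrrtend
  have hev : ∀ᶠ k in atTop, 0 ≤ S k ∧
      S k / (volume (OmegaSet (g k) δ)).toReal ≤ (Module.finrank ℝ (LieA n) : ℝ) / rr k := by
    filter_upwards [hrrtend.eventually_ge_atTop 1, hmBtend.eventually_ge_atTop 0] with k h1 h2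
    have hrpos : (0:ℝ) < rr k := lt_of_lt_of_le one_pos h1
    exact area_vol_bound (OmegaSet (g k) δ) (omegaSet_convex _ _) (omegaSet_closed _ _)
      (omegaSet_bounded _ _) hrpos (hball k hrpos.le h2) (hS k)
  apply tendsto_of_tendsto_of_tendsto_of_le_of_le' (g := fun _ => (0:ℝ))
    (h := fun k => (Module.finrank ℝ (LieA n) : ℝ) / rr k) tendsto_const_nhds hdrtend
  · filter_upwards [hev] with k hk
    exact div_nonneg hk.1 ENNReal.toReal_nonneg
  · filter_upwards [hev] with k hk
    exact hk.2
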